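/- Let a : [0,∞) → ℝ be continuous, nonnegative, and satisfy a(t) ≤ A·exp(B·∫₀ᵗ ln(1 + a(τ)) dτ) for all t ≥ 0, with constants A ≥ 1 and B > 0. Then ln(1 + a(t)) ≤ ln(1 + A)·exp(B·t) for all t ≥ 0; in particular a(t) ≤ (1 + A)^{exp(Bt)} − 1, a double exponential bound in time. -/

import Mathlib

open MeasureTheory Set

/-- Log-Grönwall step (esp71): double-exponential bound in time. -/
theorem stmt_12 (A B : ℝ) (hA : 1 ≤ A) (hB : 0 < B) (a : ℝ → ℝ)
    (hacont : ContinuousOn a (Ici 0))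
    (hann : ∀ t ∈ Ici (0:ℝ), 0 ≤ a t)
    (hineq : ∀ t ∈ Ici (0:ℝ),
      a t ≤ A * Real.exp (B * ∫ τ in (0:ℝ)..t, Real.log (1 + a τ))) :
    (∀ t ∈ Ici (0:ℝ), Real.log (1 + a t) ≤ Real.log (1 + A) * Real.exp (B * t)) ∧
    (∀ t ∈ Ici (0:ℝ), a t ≤ (1 + A) ^ Real.exp (B * t) - 1) := by
  set C : ℝ := Real.log (1 + A) with hCdef
  have hC : 0 ≤ C := Real.log_nonneg (by linarith)
  -- global continuous extension of the integrand
  set g : ℝ → ℝ := fun τ => Real.log (1 + a (max τ 0)) with hgdef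
  have hmax : Continuous fun τ : ℝ => max τ 0 := continuous_id.max continuous_const
  have hamax : Continuous fun τ : ℝ => a (max τ 0) :=
    hacont.comp_continuous hmax (fun x => Set.mem_Ici.2 (le_max_right _ _))
  have hg : Continuous g := by
    apply Continuous.log (continuous_const.add hamax)
    intro x
    have := hann _ (le_max_right x 0)
    exact ne_of_gt (by simp only [Pi.add_apply]; linarith)
  have hgnn : ∀ τ, 0 ≤ g τ := fun τ =>
    Real.log_nonneg (by have := hann _ (le_max_right τ 0); linarith)
  have hgeq : ∀ t ∈ Ici (0:ℝ), g t = Real.log (1 + a t) := by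
    intro t ht
    simp [hgdef, max_eq_left (Set.mem_Ici.1 ht : (0:ℝ) ≤ t)]
  set F : ℝ → ℝ := fun t => ∫ τ in (0:ℝ)..t, g τ with hFdef
  have hFd : ∀ s : ℝ, HasDerivAt F (g s) s := fun s =>
    intervalIntegral.integral_hasDerivAt_right (hg.intervalIntegrable 0 s)
      (hg.stronglyMeasurableAtFilter _ _) hg.continuousAt
  have hFcont : Continuous F :=
    continuous_iff_continuousAt.2 fun s => (hFd s).continuousAt
  have hFnn : ∀ t ∈ Ici (0:ℝ), 0 ≤ F t := fun t ht =>
    intervalIntegral.integral_nonneg ht (fun u _ => hgnn u)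
  have hF0 : F 0 = 0 := intervalIntegral.integral_same
  -- the key pointwise inequality
  have key : ∀ t ∈ Ici (0:ℝ), g t ≤ C + B * F t := by
    intro t ht
    have hint : (∫ τ in (0:ℝ)..t, Real.log (1 + a τ)) = F t := by
      refine (intervalIntegral.integral_congr fun τ hτ => ?_).symm
      rw [uIcc_of_le (ht : (0:ℝ) ≤ t)] at hτ
      exact hgeq τ hτ.1
    have h1 : a t ≤ A * Real.exp (B * F t) := by
      have := hineq t ht
      rwa [hint] at this
    have hexp1 : 1 ≤ Real.exp (B * F t) :=
      Real.one_le_exp (by have := hFnn t ht; positivity)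
    have h2 : 1 + a t ≤ (1 + A) * Real.exp (B * F t) := by nlinarith
    have h3 : (0:ℝ) < 1 + a t := by have := hann t ht; linarith
    calc g t = Real.log (1 + a t) := hgeq t ht
      _ ≤ Real.log ((1 + A) * Real.exp (B * F t)) := Real.log_le_log h3 h2
      _ = C + B * F t := by
          rw [Real.log_mul (by positivity) (Real.exp_ne_zero _), Real.log_exp]
  -- Grönwall on [0, t₀]
  have main : ∀ t ∈ Ici (0:ℝ), Real.log (1 + a t) ≤ C * Real.exp (B * t) := by
    intro t₀ ht₀
    have hgron := norm_le_gronwallBound_of_norm_deriv_right_le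
      (f := F) (f' := g) (δ := 0) (K := B) (ε := C) (a := 0) (b := t₀)
      hFcont.continuousOn (fun x _ => (hFd x).hasDerivWithinAt)
      (by simp [hF0]) (fun x hx => ?_) t₀ ⟨ht₀, le_refl _⟩
    · have hFt : F t₀ ≤ B⁻¹ * C * (Real.exp (B * t₀) - 1) := by
        have hFabs : ‖F t₀‖ = F t₀ := Real.norm_of_nonneg (hFnn t₀ ht₀)
        rw [hFabs, gronwallBound_of_K_ne_0 hB.ne'] at hgron
        rw [div_eq_inv_mul] at hgron
        simpa using hgron
      have hgt := key t₀ ht₀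
      rw [hgeq t₀ ht₀] at hgt
      have hexp1 : 1 ≤ Real.exp (B * t₀) := Real.one_le_exp (mul_nonneg hB.le ht₀)
      have hBinv : B * (B⁻¹ * C * (Real.exp (B * t₀) - 1))
          = C * (Real.exp (B * t₀) - 1) := by
        field_simp
      nlinarith [mul_le_mul_of_nonneg_left hFt hB.le]
    · have hx0 : (0:ℝ) ≤ x := hx.1
      have : g x ≤ C + B * F x := key x hx0
      rw [Real.norm_of_nonneg (hgnn x), Real.norm_of_nonneg (hFnn x hx0)]
      linarith
  refine ⟨main, fun t ht => ?_⟩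
  have h3 : (0:ℝ) < 1 + a t := by have := hann t ht; linarith
  have h4 : 1 + a t ≤ (1 + A) ^ Real.exp (B * t) := by
    rw [Real.rpow_def_of_pos (by linarith : (0:ℝ) < 1 + A)]
    calc 1 + a t = Real.exp (Real.log (1 + a t)) := (Real.exp_log h3).symm
      _ ≤ Real.exp (Real.log (1 + A) * Real.exp (B * t)) :=
          Real.exp_le_exp.2 (main t ht)
  linarith
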